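/- Let (G,c) be a k-submodular (X,k)-network representing f : {0,...,k}^X → ℝ. Then an assignment φ is an extreme minimum solution of f if and only if the corresponding cut S_φ is an extreme normalised minimum cut. Here φ is dominated by a minimizer ψ if φ ≠ ψ and φ(v) ≠ 0 implies φ(v) = ψ(v); extreme means dominated by no minimizer. A normalised minimum cut S is dominated by a normalised minimum cut S' if S ⊊ S'; extreme means dominated by none. -/

import Mathlib

/-- The vertex set of an `(X,k)`-network. -/
abbrev NetV (X : Type*) (k : ℕ) := (X × Fin k) ⊕ Bool

/-- The source vertex `s`. -/
def srcV (X : Type*) (k : ℕ) : NetV X k := Sum.inr false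

/-- The sink vertex `t`. -/
def snkV (X : Type*) (k : ℕ) : NetV X k := Sum.inr true

/-- The capacity of a cut `S`: total capacity of edges leaving `S`. -/
def cutCap {W : Type*} [Fintype W] [DecidableEq W]
    (c : W → W → ℝ) (S : Finset W) : ℝ :=
  ∑ u ∈ S, ∑ v ∈ Sᶜ, c u v

/-- The cut `S_φ = {s} ∪ {v_{φ(v)} : φ(v) ≠ 0}` corresponding to an
assignment `φ : X → {0,...,k}`. -/
def cutOf {X : Type*} [Fintype X] [DecidableEq X] (k : ℕ) (φ : X → ℕ) :
    Finset (NetV X k) :=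
  insert (srcV X k) (Finset.univ.filter fun w =>
    ∃ (v : X) (i : Fin k), w = Sum.inl (v, i) ∧ φ v = (i : ℕ) + 1)

/-- The normalisation `ν(S)`. -/
def normCut {X : Type*} [Fintype X] [DecidableEq X] {k : ℕ}
    (S : Finset (NetV X k)) : Finset (NetV X k) :=
  insert (srcV X k) (S.filter fun w =>
    ∃ (v : X) (i : Fin k), w = Sum.inl (v, i) ∧
      ∀ j : Fin k, Sum.inl (v, j) ∈ S → j = i)

/-- `S` is a normalised minimum `s`-`t` cut. -/
def IsNormMinCut {X : Type*} [Fintype X] [DecidableEq X] {k : ℕ}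
    (c : NetV X k → NetV X k → ℝ) (S : Finset (NetV X k)) : Prop :=
  srcV X k ∈ S ∧ snkV X k ∉ S ∧
  (∀ (v : X) (i j : Fin k), Sum.inl (v, i) ∈ S → Sum.inl (v, j) ∈ S → i = j) ∧
  ∀ S' : Finset (NetV X k), srcV X k ∈ S' → snkV X k ∉ S' →
    cutCap c S ≤ cutCap c S'
set_option linter.unusedSectionVars false
section Aux
variable {X : Type*} [Fintype X] [DecidableEq X] {k : ℕ}

lemma src_mem_cutOf (φ : X → ℕ) : srcV X k ∈ cutOf k φ := Finset.mem_insert_self _ _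

lemma snk_not_mem_cutOf (φ : X → ℕ) : snkV X k ∉ cutOf k φ := by
  simp [cutOf, snkV, srcV]

lemma inl_mem_cutOf {φ : X → ℕ} {v : X} {i : Fin k} :
    Sum.inl (v, i) ∈ cutOf k φ ↔ φ v = (i : ℕ) + 1 := by
  simp [cutOf, srcV]

lemma cutOf_normal {φ : X → ℕ} {v : X} {i j : Fin k}
    (hi : Sum.inl (v, i) ∈ cutOf k φ) (hj : Sum.inl (v, j) ∈ cutOf k φ) : i = j := by
  rw [inl_mem_cutOf] at hi hj
  exact Fin.ext (by omega)

noncomputable def asgOf (S : Finset (NetV X k)) (v : X) : ℕ :=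
  if h : ∃ i : Fin k, Sum.inl (v, i) ∈ S then ((Classical.choose h : Fin k) : ℕ) + 1 else 0

lemma asgOf_le (S : Finset (NetV X k)) (v : X) : asgOf S v ≤ k := by
  unfold asgOf
  split
  · next h => exact (Classical.choose h).isLt
  · omega

lemma cutOf_asgOf {S : Finset (NetV X k)} (hs : srcV X k ∈ S) (ht : snkV X k ∉ S)
    (hn : ∀ (v : X) (i j : Fin k), Sum.inl (v, i) ∈ S → Sum.inl (v, j) ∈ S → i = j) :
    cutOf k (asgOf S) = S := by
  ext w
  rcases w with ⟨v, i⟩ | b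
  · rw [inl_mem_cutOf]
    unfold asgOf
    constructor
    · intro h
      split at h
      · next hex =>
        have hsp := Classical.choose_spec hex
        have hci : Classical.choose hex = i := Fin.ext (by omega)
        rwa [hci] at hsp
      · omega
    · intro h
      have hex : ∃ j : Fin k, Sum.inl (v, j) ∈ S := ⟨i, h⟩
      rw [dif_pos hex]
      have := hn v _ _ (Classical.choose_spec hex) h
      rw [this]
  · cases b
    · simp only [show (Sum.inr false : NetV X k) = srcV X k from rfl]
      simp [src_mem_cutOf, hs]
    · simp only [show (Sum.inr true : NetV X k) = snkV X k from rfl]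
      simp [snk_not_mem_cutOf, ht]

lemma src_mem_normCut (S : Finset (NetV X k)) : srcV X k ∈ normCut S :=
  Finset.mem_insert_self _ _

lemma snk_not_mem_normCut (S : Finset (NetV X k)) : snkV X k ∉ normCut S := by
  simp [normCut, snkV, srcV]

lemma inl_mem_normCut {S : Finset (NetV X k)} {v : X} {i : Fin k} :
    Sum.inl (v, i) ∈ normCut S ↔
      Sum.inl (v, i) ∈ S ∧ ∀ j : Fin k, Sum.inl (v, j) ∈ S → j = i := by
  simp [normCut, srcV]

lemma normCut_normal {S : Finset (NetV X k)} {v : X} {i j : Fin k}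
    (hi : Sum.inl (v, i) ∈ normCut S) (hj : Sum.inl (v, j) ∈ normCut S) : i = j := by
  rw [inl_mem_normCut] at hi hj
  exact (hi.2 j hj.1).symm

end Aux
theorem stmt18 {X : Type*} [Fintype X] [DecidableEq X] (k : ℕ)
    (c : NetV X k → NetV X k → ℝ) (hc : ∀ u v, 0 ≤ c u v)
    (f : (X → ℕ) → ℝ)
    -- the network represents `f`:
    (hrep : ∀ φ : X → ℕ, (∀ v, φ v ≤ k) → cutCap c (cutOf k φ) = f φ)
    -- the network is `k`-submodular:
    (hksub : ∀ S : Finset (NetV X k), srcV X k ∈ S → snkV X k ∉ S →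
      cutCap c (normCut S) ≤ cutCap c S)
    (φ : X → ℕ) (hφ : ∀ v, φ v ≤ k) :
    -- `φ` is an extreme minimum solution of `f` iff `S_φ` is an extreme
    -- normalised minimum cut.
    ((∀ ψ : X → ℕ, (∀ v, ψ v ≤ k) → f φ ≤ f ψ) ∧
      ¬∃ ψ : X → ℕ, (∀ v, ψ v ≤ k) ∧
        (∀ χ : X → ℕ, (∀ v, χ v ≤ k) → f ψ ≤ f χ) ∧
        ψ ≠ φ ∧ (∀ v, φ v ≠ 0 → φ v = ψ v)) ↔
    (IsNormMinCut c (cutOf k φ) ∧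
      ¬∃ S' : Finset (NetV X k), IsNormMinCut c S' ∧ cutOf k φ ⊂ S') := by
  have key : ∀ ψ : X → ℕ, (∀ v, ψ v ≤ k) →
      ((∀ χ : X → ℕ, (∀ v, χ v ≤ k) → f ψ ≤ f χ) ↔ IsNormMinCut c (cutOf k ψ)) := by
    intro ψ hψ
    constructor
    · intro hmin
      refine ⟨src_mem_cutOf ψ, snk_not_mem_cutOf ψ,
        fun v i j hi hj => cutOf_normal hi hj, ?_⟩
      intro S' hs ht
      have hψ'le : ∀ v, asgOf (normCut S') v ≤ k := fun v => asgOf_le _ v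
      have heq : cutOf k (asgOf (normCut S')) = normCut S' :=
        cutOf_asgOf (src_mem_normCut S') (snk_not_mem_normCut S')
          (fun v i j hi hj => normCut_normal hi hj)
      calc cutCap c (cutOf k ψ) = f ψ := hrep ψ hψ
        _ ≤ f (asgOf (normCut S')) := hmin _ hψ'le
        _ = cutCap c (cutOf k (asgOf (normCut S'))) := (hrep _ hψ'le).symm
        _ = cutCap c (normCut S') := by rw [heq]
        _ ≤ cutCap c S' := hksub S' hs ht
    · intro hS χ hχ
      calc f ψ = cutCap c (cutOf k ψ) := (hrep ψ hψ).symm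
        _ ≤ cutCap c (cutOf k χ) := hS.2.2.2 _ (src_mem_cutOf χ) (snk_not_mem_cutOf χ)
        _ = f χ := hrep χ hχ
  have hB : (∃ ψ : X → ℕ, (∀ v, ψ v ≤ k) ∧
        (∀ χ : X → ℕ, (∀ v, χ v ≤ k) → f ψ ≤ f χ) ∧
        ψ ≠ φ ∧ (∀ v, φ v ≠ 0 → φ v = ψ v)) ↔
      (∃ S' : Finset (NetV X k), IsNormMinCut c S' ∧ cutOf k φ ⊂ S') := by
    constructor
    · rintro ⟨ψ, hψk, hψmin, hne, hdom⟩
      refine ⟨cutOf k ψ, (key ψ hψk).mp hψmin, ?_⟩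
      have hsub : cutOf k φ ⊆ cutOf k ψ := by
        intro w hw
        rcases w with ⟨v, i⟩ | b
        · rw [inl_mem_cutOf] at hw ⊢
          rw [← hdom v (by omega)]
          exact hw
        · cases b
          · exact src_mem_cutOf ψ
          · exact absurd hw (snk_not_mem_cutOf φ)
      refine Finset.ssubset_iff_subset_ne.mpr ⟨hsub, ?_⟩
      intro heqc
      obtain ⟨v, hv⟩ := Function.ne_iff.mp hne
      by_cases h0 : φ v = 0
      · have hψ0 : ψ v ≠ 0 := fun h => hv (by rw [h, h0])
        have hjlt : ψ v - 1 < k := by have := hψk v; omega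
        have hmem : Sum.inl (v, (⟨ψ v - 1, hjlt⟩ : Fin k)) ∈ cutOf k ψ :=
          inl_mem_cutOf.mpr (by simp; omega)
        rw [← heqc, inl_mem_cutOf] at hmem
        simp at hmem; omega
      · exact hv ((hdom v h0).symm)
    · rintro ⟨S', hS', hsub⟩
      obtain ⟨hs, ht, hn, hmin⟩ := hS'
      have heq : cutOf k (asgOf S') = S' :=
        cutOf_asgOf hs ht (fun v i j hi hj => hn v i j hi hj)
      refine ⟨asgOf S', fun v => asgOf_le _ _, ?_, ?_, ?_⟩
      · have hnm : IsNormMinCut c (cutOf k (asgOf S')) := by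
          rw [heq]; exact ⟨hs, ht, hn, hmin⟩
        exact (key _ (fun v => asgOf_le _ _)).mpr hnm
      · intro hpe
        rw [hpe] at heq
        exact hsub.ne heq
      · intro v hv0
        have hilt : φ v - 1 < k := by have := hφ v; omega
        have hmemφ : Sum.inl (v, (⟨φ v - 1, hilt⟩ : Fin k)) ∈ cutOf k φ :=
          inl_mem_cutOf.mpr (by simp; omega)
        have hmem : Sum.inl (v, (⟨φ v - 1, hilt⟩ : Fin k)) ∈ cutOf k (asgOf S') := by
          rw [heq]; exact hsub.subset hmemφ
        rw [inl_mem_cutOf] at hmem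
        simp at hmem; omega
  rw [key φ hφ, hB]
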